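/- Let u_T ∈ L²(Ω) and define the loss ℓ(u) = (1/2)‖u − u_T‖²_{L²(Ω)}. For each w ∈ U_ad let u(w) ∈ V_c be the unique solution of μ(u,ψ)_{V^w} + λ ∫_Ω (u − f)ψ dx = 0 for all ψ ∈ V_c. Suppose w ∈ U_ad minimizes w ↦ ℓ(u(w)) over U_ad, set u = u(w), and let p ∈ V_c be the unique solution of the adjoint equation μ(p,φ)_{V^w} + λ ∫_Ω p φ dx = −∫_Ω (u − u_T) φ dx for all φ ∈ V_c. Then the first-order variational inequality μ ∫_{Ω̂}∫_{Ω̂} (u(x) − u(y))(p(x) − p(y)) γ̃_{(h − w)}(x,y) dy dx ≥ 0 holds for all h ∈ U_ad. -/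

import Mathlib

open MeasureTheory Filter
open scoped ENNReal NNReal

noncomputable section

abbrev Rd (d : ℕ) : Type := Fin d → ℝ

def interDom {d : ℕ} (Ω : Set (Rd d)) (ε : ℝ) : Set (Rd d) :=
  {y | y ∉ Ω ∧ ∃ x ∈ Ω, ‖y - x‖ ≤ ε}

def Uad {d : ℕ} (ρ Wb : ℝ) : Set (Rd d → ℝ) :=
  {w | MemLp w 2 (volume.restrict (Metric.closedBall (0 : Rd d) ρ)) ∧
    ∀ᵐ τ ∂volume.restrict (Metric.closedBall (0 : Rd d) ρ), 0 ≤ w τ ∧ w τ ≤ Wb}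

def kernelW {d : ℕ} (ρ ε : ℝ) (f w : Rd d → ℝ) (x y : Rd d) : ℝ :=
  if ‖x - y‖ ≤ ε then
    Real.exp (-∫ τ in Metric.closedBall (0 : Rd d) ρ, w τ * (f (x + τ) - f (y + τ)) ^ 2)
  else 0

def kernelLin {d : ℕ} (ρ ε : ℝ) (f w h : Rd d → ℝ) (x y : Rd d) : ℝ :=
  if ‖x - y‖ ≤ ε then
    -kernelW ρ ε f w x y *
      ∫ τ in Metric.closedBall (0 : Rd d) ρ, h τ * (f (x + τ) - f (y + τ)) ^ 2
  else 0

def innerV {d : ℕ} (A : Set (Rd d)) (γ : Rd d → Rd d → ℝ) (u v : Rd d → ℝ) : ℝ :=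
  ∫ x in A, ∫ y in A, (u x - u y) * (v x - v y) * γ x y

def Vc {d : ℕ} (A I : Set (Rd d)) : Set (Rd d → ℝ) :=
  {v | MemLp v 2 (volume.restrict A) ∧ ∀ᵐ x ∂volume.restrict I, v x = 0}

def L2norm {d : ℕ} (s : Set (Rd d)) (v : Rd d → ℝ) : ℝ :=
  (eLpNorm v 2 (volume.restrict s)).toReal

/-! ### Auxiliary lemmas -/

section Aux

variable {d : ℕ}

lemma L2norm_sq_eq {s : Set (Rd d)} {v : Rd d → ℝ}
    (hv : MemLp v 2 (volume.restrict s)) :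
    L2norm s v ^ 2 = ∫ x in s, v x ^ 2 := by
  set μ := volume.restrict s
  have heq : ∀ x, ‖v x‖ ^ ((2:ℝ≥0∞)).toReal = v x ^ 2 := by
    intro x
    rw [ENNReal.toReal_ofNat, Real.rpow_two, Real.norm_eq_abs, sq_abs]
  have hr : (0:ℝ) ≤ ∫ x, v x ^ 2 ∂μ := integral_nonneg fun x => sq_nonneg _
  rw [L2norm, hv.eLpNorm_eq_integral_rpow_norm two_ne_zero ENNReal.ofNat_ne_top]
  rw [integral_congr_ae (ae_of_all _ heq)]
  rw [ENNReal.toReal_ofReal (by positivity)]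
  rw [← Real.rpow_natCast ((∫ x, v x ^ 2 ∂μ) ^ ((2:ℝ≥0∞)).toReal⁻¹) 2, ← Real.rpow_mul hr]
  norm_num

lemma integrable_mul_L2 {α : Type*} [MeasurableSpace α] {μ : Measure α} {u v : α → ℝ}
    (hu : MemLp u 2 μ) (hv : MemLp v 2 μ) :
    Integrable (fun x => u x * v x) μ := by
  refine ((hu.integrable_sq.add hv.integrable_sq).const_mul (1/2 : ℝ)).mono'
    (hu.aestronglyMeasurable.mul hv.aestronglyMeasurable) (ae_of_all _ fun x => ?_)
  simp only [Real.norm_eq_abs, abs_mul]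
  simp only [Pi.add_apply]
  nlinarith [sq_nonneg (|u x| - |v x|), sq_abs (u x), sq_abs (v x), abs_nonneg (u x),
    abs_nonneg (v x)]

lemma integral_abs_mul_le {α : Type*} [MeasurableSpace α] {μ : Measure α} {u v : α → ℝ}
    (hu : MemLp u 2 μ) (hv : MemLp v 2 μ) :
    ∫ x, ‖u x‖ * ‖v x‖ ∂μ ≤ Real.sqrt (∫ x, u x ^ 2 ∂μ) * Real.sqrt (∫ x, v x ^ 2 ∂μ) := by
  have hconj : (2:ℝ).HolderConjugate 2 := Real.HolderConjugate.two_two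
  have h2 : ENNReal.ofReal (2:ℝ) = 2 := by norm_num
  have h := integral_mul_norm_le_Lp_mul_Lq (μ := μ) hconj (h2 ▸ hu) (h2 ▸ hv)
  have hu2 : ∀ x, ‖u x‖ ^ (2:ℝ) = u x ^ 2 := fun x => by
    rw [Real.rpow_two, Real.norm_eq_abs, sq_abs]
  have hv2 : ∀ x, ‖v x‖ ^ (2:ℝ) = v x ^ 2 := fun x => by
    rw [Real.rpow_two, Real.norm_eq_abs, sq_abs]
  rw [integral_congr_ae (ae_of_all _ hu2), integral_congr_ae (ae_of_all _ hv2)] at h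
  rw [Real.sqrt_eq_rpow, Real.sqrt_eq_rpow]
  exact h

end Aux

section Aux2

variable {d : ℕ}

lemma finiteRestrict {A : Set (Rd d)} (hA : volume A ≠ ⊤) :
    IsFiniteMeasure (volume.restrict A) :=
  ⟨by rwa [Measure.restrict_apply_univ, lt_top_iff_ne_top]⟩

lemma integral_norm_le' {A : Set (Rd d)} (hA : volume A ≠ ⊤) {u : Rd d → ℝ}
    (hu : MemLp u 2 (volume.restrict A)) :
    ∫ x in A, ‖u x‖ ≤ Real.sqrt ((volume A).toReal) * Real.sqrt (∫ x in A, u x ^ 2) := by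
  haveI := finiteRestrict hA
  have h := integral_abs_mul_le hu (memLp_const (μ := volume.restrict A) (1:ℝ))
  simp only [norm_one, mul_one] at h
  have h1 : ∫ x in A, (1:ℝ)^2 = (volume A).toReal := by
    simp [Measure.restrict_apply_univ, Measure.real]
  rw [h1] at h
  linarith [h]

lemma ae_comp_add {g g' : Rd d → ℝ} (h : g =ᵐ[(volume : Measure (Rd d))] g') (x : Rd d) :
    (fun τ => g (x + τ)) =ᵐ[(volume : Measure (Rd d))] (fun τ => g' (x + τ)) := by
  rw [Filter.EventuallyEq, ae_iff] at h ⊢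
  have hs : {τ | ¬ g (x + τ) = g' (x + τ)} = (fun τ => x + τ) ⁻¹' {z | ¬ g z = g' z} := rfl
  rw [hs, measure_preimage_add]
  exact h

lemma kernelW_congr {ρ ε : ℝ} {f f' w w' : Rd d → ℝ} (hf : f =ᵐ[(volume : Measure (Rd d))] f')
    (hw : w =ᵐ[volume.restrict (Metric.closedBall (0:Rd d) ρ)] w') (x y : Rd d) :
    kernelW ρ ε f w x y = kernelW ρ ε f' w' x y := by
  unfold kernelW
  split_ifs with hxy
  · congr 1
    congr 1
    refine integral_congr_ae ?_
    filter_upwards [ae_restrict_of_ae (ae_comp_add hf x), ae_restrict_of_ae (ae_comp_add hf y),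
      hw] with τ h1 h2 h3
    rw [h1, h2, h3]
  · rfl

lemma kernelLin_congr {ρ ε : ℝ} {f f' w w' h h' : Rd d → ℝ}
    (hf : f =ᵐ[(volume : Measure (Rd d))] f')
    (hw : w =ᵐ[volume.restrict (Metric.closedBall (0:Rd d) ρ)] w')
    (hh : h =ᵐ[volume.restrict (Metric.closedBall (0:Rd d) ρ)] h') (x y : Rd d) :
    kernelLin ρ ε f w h x y = kernelLin ρ ε f' w' h' x y := by
  unfold kernelLin
  split_ifs with hxy
  · rw [kernelW_congr hf hw x y]
    congr 1
    refine integral_congr_ae ?_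
    filter_upwards [ae_restrict_of_ae (ae_comp_add hf x), ae_restrict_of_ae (ae_comp_add hf y),
      hh] with τ h1 h2 h3
    rw [h1, h2, h3]
  · rfl

lemma measurable_kernel_aux {f w : Rd d → ℝ} (hf : Measurable f) (hw : Measurable w) (ρ : ℝ) :
    Measurable (fun q : Rd d × Rd d =>
      ∫ τ in Metric.closedBall (0:Rd d) ρ, w τ * (f (q.1 + τ) - f (q.2 + τ))^2) := by
  have hm : StronglyMeasurable (fun z : (Rd d × Rd d) × Rd d =>
      w z.2 * (f (z.1.1 + z.2) - f (z.1.2 + z.2))^2) := by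
    apply Measurable.stronglyMeasurable
    exact (hw.comp measurable_snd).mul
      (((hf.comp ((measurable_fst.comp measurable_fst).add measurable_snd)).sub
        (hf.comp ((measurable_snd.comp measurable_fst).add measurable_snd))).pow_const 2)
  exact hm.integral_prod_right'.measurable

lemma measurable_kernelW {ρ ε : ℝ} {f w : Rd d → ℝ} (hf : Measurable f) (hw : Measurable w) :
    Measurable (fun q : Rd d × Rd d => kernelW ρ ε f w q.1 q.2) := by
  unfold kernelW
  exact Measurable.ite
    (measurableSet_le (measurable_fst.sub measurable_snd).norm measurable_const)
    (Real.measurable_exp.comp (measurable_kernel_aux hf hw ρ).neg) measurable_const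

lemma measurable_kernelLin {ρ ε : ℝ} {f w h : Rd d → ℝ} (hf : Measurable f)
    (hw : Measurable w) (hh : Measurable h) :
    Measurable (fun q : Rd d × Rd d => kernelLin ρ ε f w h q.1 q.2) := by
  unfold kernelLin
  exact Measurable.ite
    (measurableSet_le (measurable_fst.sub measurable_snd).norm measurable_const)
    ((measurable_kernelW hf hw).neg.mul (measurable_kernel_aux hf hh ρ)) measurable_const

end Aux2

section InnerVLem

variable {d : ℕ} {A : Set (Rd d)} {κ κ₁ κ₂ : Rd d → Rd d → ℝ} {u u₁ u₂ v : Rd d → ℝ}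
  {c c₁ c₂ : ℝ}

lemma innerV_congr_ae {u' v' : Rd d → ℝ} (hu : u =ᵐ[volume.restrict A] u')
    (hv : v =ᵐ[volume.restrict A] v') : innerV A κ u v = innerV A κ u' v' := by
  unfold innerV
  refine integral_congr_ae ?_
  filter_upwards [hu, hv] with x hx1 hx2
  refine integral_congr_ae ?_
  filter_upwards [hu, hv] with y hy1 hy2
  rw [hx1, hx2, hy1, hy2]

lemma innerV_symm : innerV A κ u v = innerV A κ v u := by
  unfold innerV
  exact integral_congr_ae (ae_of_all _ fun x =>
    integral_congr_ae (ae_of_all _ fun y => by ring))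

lemma innerV_smul_kernel (t : ℝ) :
    innerV A (fun x y => t * κ x y) u v = t * innerV A κ u v := by
  unfold innerV
  rw [← integral_const_mul]
  refine integral_congr_ae (ae_of_all _ fun x => ?_)
  beta_reduce
  rw [← integral_const_mul]
  exact integral_congr_ae (ae_of_all _ fun y => by ring)

lemma inner_integrable (hA : volume A ≠ ⊤)
    (hum : Measurable u) (hu2 : MemLp u 2 (volume.restrict A))
    (hvm : Measurable v) (hv2 : MemLp v 2 (volume.restrict A))
    (hκm : Measurable (fun q : Rd d × Rd d => κ q.1 q.2)) (hκb : ∀ x y, |κ x y| ≤ c)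
    (x : Rd d) :
    Integrable (fun y => (u x - u y) * (v x - v y) * κ x y) (volume.restrict A) := by
  haveI := finiteRestrict hA
  have hg : Integrable (fun y => c * ((‖u x‖ + ‖u y‖) * (‖v x‖ + ‖v y‖)))
      (volume.restrict A) :=
    (integrable_mul_L2 ((memLp_const ‖u x‖).add hu2.norm) ((memLp_const ‖v x‖).add hv2.norm)).const_mul c
  refine hg.mono' ?_ (ae_of_all _ fun y => ?_)
  · exact (((measurable_const.sub hum).mul (measurable_const.sub hvm)).mul
      (hκm.comp measurable_prodMk_left)).aestronglyMeasurable
  · have h1 : ‖u x - u y‖ ≤ ‖u x‖ + ‖u y‖ := norm_sub_le _ _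
    have h2 : ‖v x - v y‖ ≤ ‖v x‖ + ‖v y‖ := norm_sub_le _ _
    have h3 : ‖κ x y‖ ≤ c := by rw [Real.norm_eq_abs]; exact hκb x y
    calc ‖(u x - u y) * (v x - v y) * κ x y‖
        = ‖u x - u y‖ * ‖v x - v y‖ * ‖κ x y‖ := by rw [norm_mul, norm_mul]
      _ ≤ (‖u x‖ + ‖u y‖) * (‖v x‖ + ‖v y‖) * c := by
          exact mul_le_mul (mul_le_mul h1 h2 (norm_nonneg _) (by positivity)) h3
            (norm_nonneg _) (by positivity)
      _ = c * ((‖u x‖ + ‖u y‖) * (‖v x‖ + ‖v y‖)) := by ring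

lemma inner_meas (hum : Measurable u) (hvm : Measurable v)
    (hκm : Measurable (fun q : Rd d × Rd d => κ q.1 q.2)) :
    Measurable (fun x => ∫ y in A, (u x - u y) * (v x - v y) * κ x y) := by
  have hm : StronglyMeasurable (fun q : Rd d × Rd d =>
      (u q.1 - u q.2) * (v q.1 - v q.2) * κ q.1 q.2) := by
    apply Measurable.stronglyMeasurable
    exact (((hum.comp measurable_fst).sub (hum.comp measurable_snd)).mul
      ((hvm.comp measurable_fst).sub (hvm.comp measurable_snd))).mul hκm
  exact hm.integral_prod_right'.measurable

lemma inner_abs_le (hA : volume A ≠ ⊤)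
    (hum : Measurable u) (hu2 : MemLp u 2 (volume.restrict A))
    (hvm : Measurable v) (hv2 : MemLp v 2 (volume.restrict A))
    (hκm : Measurable (fun q : Rd d × Rd d => κ q.1 q.2)) (hκb : ∀ x y, |κ x y| ≤ c)
    (x : Rd d) :
    ‖∫ y in A, (u x - u y) * (v x - v y) * κ x y‖ ≤
      c * ((volume A).toReal * (‖u x‖ * ‖v x‖) + (‖u x‖ * ∫ y in A, ‖v y‖) +
        ((‖v x‖ * ∫ y in A, ‖u y‖) + ∫ y in A, ‖u y‖ * ‖v y‖)) := by
  haveI := finiteRestrict hA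
  have hui : Integrable (fun y => ‖u y‖) (volume.restrict A) := hu2.norm.integrable one_le_two
  have hvi : Integrable (fun y => ‖v y‖) (volume.restrict A) := hv2.norm.integrable one_le_two
  have huvi : Integrable (fun y => ‖u y‖ * ‖v y‖) (volume.restrict A) :=
    integrable_mul_L2 hu2.norm hv2.norm
  have step1 : ‖∫ y in A, (u x - u y) * (v x - v y) * κ x y‖ ≤
      ∫ y in A, c * ((‖u x‖ + ‖u y‖) * (‖v x‖ + ‖v y‖)) := by
    refine (norm_integral_le_integral_norm _).trans ?_
    refine integral_mono (inner_integrable hA hum hu2 hvm hv2 hκm hκb x).norm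
      ((integrable_mul_L2 ((memLp_const ‖u x‖).add hu2.norm)
        ((memLp_const ‖v x‖).add hv2.norm)).const_mul c) (fun y => ?_)
    have h1 : ‖u x - u y‖ ≤ ‖u x‖ + ‖u y‖ := norm_sub_le _ _
    have h2 : ‖v x - v y‖ ≤ ‖v x‖ + ‖v y‖ := norm_sub_le _ _
    have h3 : ‖κ x y‖ ≤ c := by rw [Real.norm_eq_abs]; exact hκb x y
    calc ‖(u x - u y) * (v x - v y) * κ x y‖
        = ‖u x - u y‖ * ‖v x - v y‖ * ‖κ x y‖ := by rw [norm_mul, norm_mul]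
      _ ≤ (‖u x‖ + ‖u y‖) * (‖v x‖ + ‖v y‖) * c := by
          exact mul_le_mul (mul_le_mul h1 h2 (norm_nonneg _) (by positivity)) h3
            (norm_nonneg _) (by positivity)
      _ = c * ((‖u x‖ + ‖u y‖) * (‖v x‖ + ‖v y‖)) := by ring
  refine step1.trans (le_of_eq ?_)
  rw [integral_const_mul]
  congr 1
  have expand : (fun y => (‖u x‖ + ‖u y‖) * (‖v x‖ + ‖v y‖)) =
      fun y => ‖u x‖ * ‖v x‖ + (‖u x‖ * ‖v y‖ + (‖v x‖ * ‖u y‖ + ‖u y‖ * ‖v y‖)) :=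
    funext fun y => by ring
  have i3 : Integrable (fun y => ‖v x‖ * ‖u y‖ + ‖u y‖ * ‖v y‖) (volume.restrict A) :=
    (hui.const_mul _).add huvi
  have i2 : Integrable (fun y => ‖u x‖ * ‖v y‖ + (‖v x‖ * ‖u y‖ + ‖u y‖ * ‖v y‖))
      (volume.restrict A) := (hvi.const_mul _).add i3
  rw [expand, integral_add (integrable_const _) i2, integral_add (hvi.const_mul _) i3,
    integral_add (hui.const_mul _) huvi, integral_const, integral_const_mul, integral_const_mul,
    measureReal_restrict_apply_univ, Measure.real, smul_eq_mul]
  ring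

lemma outer_integrable (hA : volume A ≠ ⊤)
    (hum : Measurable u) (hu2 : MemLp u 2 (volume.restrict A))
    (hvm : Measurable v) (hv2 : MemLp v 2 (volume.restrict A))
    (hκm : Measurable (fun q : Rd d × Rd d => κ q.1 q.2)) (hκb : ∀ x y, |κ x y| ≤ c) :
    Integrable (fun x => ∫ y in A, (u x - u y) * (v x - v y) * κ x y)
      (volume.restrict A) := by
  haveI := finiteRestrict hA
  have hui : Integrable (fun y => ‖u y‖) (volume.restrict A) := hu2.norm.integrable one_le_two
  have hvi : Integrable (fun y => ‖v y‖) (volume.restrict A) := hv2.norm.integrable one_le_two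
  have huvi : Integrable (fun y => ‖u y‖ * ‖v y‖) (volume.restrict A) :=
    integrable_mul_L2 hu2.norm hv2.norm
  have hG : Integrable (fun x => c * ((volume A).toReal * (‖u x‖ * ‖v x‖) +
      (‖u x‖ * ∫ y in A, ‖v y‖) + ((‖v x‖ * ∫ y in A, ‖u y‖) + ∫ y in A, ‖u y‖ * ‖v y‖)))
      (volume.restrict A) := by
    refine Integrable.const_mul ?_ c
    exact ((huvi.const_mul _).add (hui.mul_const _)).add
      ((hvi.mul_const _).add (integrable_const _))
  exact hG.mono' (inner_meas hum hvm hκm).aestronglyMeasurable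
    (ae_of_all _ fun x => by
      simpa using inner_abs_le hA hum hu2 hvm hv2 hκm hκb x)

end InnerVLem

section InnerVLem2

variable {d : ℕ} {A : Set (Rd d)} {κ κ₁ κ₂ : Rd d → Rd d → ℝ} {u u₁ u₂ v : Rd d → ℝ}
  {c c₁ c₂ : ℝ}

lemma innerV_abs_le (hA : volume A ≠ ⊤)
    (hum : Measurable u) (hu2 : MemLp u 2 (volume.restrict A))
    (hvm : Measurable v) (hv2 : MemLp v 2 (volume.restrict A))
    (hκm : Measurable (fun q : Rd d × Rd d => κ q.1 q.2)) (hκb : ∀ x y, |κ x y| ≤ c) :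
    |innerV A κ u v| ≤ 4 * c * (volume A).toReal *
      (Real.sqrt (∫ x in A, u x ^ 2) * Real.sqrt (∫ x in A, v x ^ 2)) := by
  haveI := finiteRestrict hA
  have hc0 : 0 ≤ c := le_trans (abs_nonneg _) (hκb 0 0)
  have hui : Integrable (fun y => ‖u y‖) (volume.restrict A) := hu2.norm.integrable one_le_two
  have hvi : Integrable (fun y => ‖v y‖) (volume.restrict A) := hv2.norm.integrable one_le_two
  have huvi : Integrable (fun y => ‖u y‖ * ‖v y‖) (volume.restrict A) :=
    integrable_mul_L2 hu2.norm hv2.norm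
  set VA := (volume A).toReal with hVA
  set Nu := ∫ y in A, ‖u y‖ with hNu
  set Nv := ∫ y in A, ‖v y‖ with hNv
  set Muv := ∫ y in A, ‖u y‖ * ‖v y‖ with hMuv
  set qu := ∫ x in A, u x ^ 2 with hqu
  set qv := ∫ x in A, v x ^ 2 with hqv
  have hVA0 : 0 ≤ VA := ENNReal.toReal_nonneg
  have hNu0 : 0 ≤ Nu := integral_nonneg fun y => norm_nonneg _
  have hNv0 : 0 ≤ Nv := integral_nonneg fun y => norm_nonneg _
  have hMuv0 : 0 ≤ Muv := integral_nonneg fun y => by positivity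
  have step1 : |innerV A κ u v| ≤
      ∫ x in A, c * (VA * (‖u x‖ * ‖v x‖) + (‖u x‖ * Nv) + ((‖v x‖ * Nu) + Muv)) := by
    rw [← Real.norm_eq_abs]
    refine (norm_integral_le_integral_norm _).trans ?_
    refine integral_mono (outer_integrable hA hum hu2 hvm hv2 hκm hκb).norm ?_
      (fun x => inner_abs_le hA hum hu2 hvm hv2 hκm hκb x)
    refine Integrable.const_mul ?_ c
    exact ((huvi.const_mul _).add (hui.mul_const _)).add ((hvi.mul_const _).add
      (integrable_const _))
  have i3 : Integrable (fun x => ‖v x‖ * Nu + Muv) (volume.restrict A) :=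
    (hvi.mul_const _).add (integrable_const _)
  have i2 : Integrable (fun x => VA * (‖u x‖ * ‖v x‖) + ‖u x‖ * Nv) (volume.restrict A) :=
    (huvi.const_mul _).add (hui.mul_const _)
  have step2 : (∫ x in A, c * (VA * (‖u x‖ * ‖v x‖) + (‖u x‖ * Nv) + ((‖v x‖ * Nu) + Muv)))
      = c * (VA * Muv + Nu * Nv + (Nv * Nu + Muv * VA)) := by
    rw [integral_const_mul, integral_add i2 i3, integral_add (huvi.const_mul _) (hui.mul_const _),
      integral_add (hvi.mul_const _) (integrable_const _), integral_const_mul,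
      integral_mul_const, integral_mul_const, integral_const, measureReal_restrict_apply_univ,
      Measure.real, ← hVA, smul_eq_mul]
    ring
  have hMle : Muv ≤ Real.sqrt qu * Real.sqrt qv := integral_abs_mul_le hu2 hv2
  have hNule : Nu ≤ Real.sqrt VA * Real.sqrt qu := integral_norm_le' hA hu2
  have hNvle : Nv ≤ Real.sqrt VA * Real.sqrt qv := integral_norm_le' hA hv2
  have hsq : Real.sqrt VA * Real.sqrt VA = VA := Real.mul_self_sqrt hVA0
  have hprod : Nu * Nv ≤ VA * (Real.sqrt qu * Real.sqrt qv) := by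
    calc Nu * Nv ≤ (Real.sqrt VA * Real.sqrt qu) * (Real.sqrt VA * Real.sqrt qv) :=
          mul_le_mul hNule hNvle hNv0 (by positivity)
      _ = (Real.sqrt VA * Real.sqrt VA) * (Real.sqrt qu * Real.sqrt qv) := by ring
      _ = VA * (Real.sqrt qu * Real.sqrt qv) := by rw [hsq]
  refine (step1.trans (le_of_eq step2)).trans ?_
  have hMle2 : VA * Muv ≤ VA * (Real.sqrt qu * Real.sqrt qv) :=
    mul_le_mul_of_nonneg_left hMle hVA0
  nlinarith [hMle2, hprod, hc0]

lemma innerV_add_left (hA : volume A ≠ ⊤)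
    (hu1m : Measurable u₁) (hu12 : MemLp u₁ 2 (volume.restrict A))
    (hu2m : Measurable u₂) (hu22 : MemLp u₂ 2 (volume.restrict A))
    (hvm : Measurable v) (hv2 : MemLp v 2 (volume.restrict A))
    (hκm : Measurable (fun q : Rd d × Rd d => κ q.1 q.2)) (hκb : ∀ x y, |κ x y| ≤ c) :
    innerV A κ (fun x => u₁ x + u₂ x) v = innerV A κ u₁ v + innerV A κ u₂ v := by
  unfold innerV
  rw [← integral_add (outer_integrable hA hu1m hu12 hvm hv2 hκm hκb)
    (outer_integrable hA hu2m hu22 hvm hv2 hκm hκb)]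
  refine integral_congr_ae (ae_of_all _ fun x => ?_)
  beta_reduce
  rw [← integral_add (inner_integrable hA hu1m hu12 hvm hv2 hκm hκb x)
    (inner_integrable hA hu2m hu22 hvm hv2 hκm hκb x)]
  exact integral_congr_ae (ae_of_all _ fun y => by ring)

lemma innerV_add_kernel (hA : volume A ≠ ⊤)
    (hum : Measurable u) (hu2 : MemLp u 2 (volume.restrict A))
    (hvm : Measurable v) (hv2 : MemLp v 2 (volume.restrict A))
    (hκ1m : Measurable (fun q : Rd d × Rd d => κ₁ q.1 q.2)) (hκ1b : ∀ x y, |κ₁ x y| ≤ c₁)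
    (hκ2m : Measurable (fun q : Rd d × Rd d => κ₂ q.1 q.2)) (hκ2b : ∀ x y, |κ₂ x y| ≤ c₂) :
    innerV A (fun x y => κ₁ x y + κ₂ x y) u v = innerV A κ₁ u v + innerV A κ₂ u v := by
  unfold innerV
  rw [← integral_add (outer_integrable hA hum hu2 hvm hv2 hκ1m hκ1b)
    (outer_integrable hA hum hu2 hvm hv2 hκ2m hκ2b)]
  refine integral_congr_ae (ae_of_all _ fun x => ?_)
  beta_reduce
  rw [← integral_add (inner_integrable hA hum hu2 hvm hv2 hκ1m hκ1b x)
    (inner_integrable hA hum hu2 hvm hv2 hκ2m hκ2b x)]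
  exact integral_congr_ae (ae_of_all _ fun y => by ring)

end InnerVLem2

section Aux3

variable {d : ℕ} {A : Set (Rd d)} {κ κ' : Rd d → Rd d → ℝ} {u v : Rd d → ℝ}

lemma innerV_kernel_congr (h : ∀ x y, κ x y = κ' x y) :
    innerV A κ u v = innerV A κ' u v := by
  unfold innerV
  exact integral_congr_ae (ae_of_all _ fun x =>
    integral_congr_ae (ae_of_all _ fun y => by beta_reduce; rw [h x y]))

lemma clamp_weight {ρ Wb : ℝ} (hWb : 0 ≤ Wb) {w : Rd d → ℝ} (hw : w ∈ Uad (d := d) ρ Wb) :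
    ∃ wt : Rd d → ℝ, Measurable wt ∧ (∀ τ, 0 ≤ wt τ ∧ wt τ ≤ Wb) ∧
      w =ᵐ[volume.restrict (Metric.closedBall (0:Rd d) ρ)] wt := by
  refine ⟨fun τ => max 0 (min Wb (hw.1.1.mk w τ)),
    measurable_const.max (measurable_const.min hw.1.1.stronglyMeasurable_mk.measurable),
    fun τ => ⟨le_max_left _ _, max_le hWb (min_le_left _ _)⟩, ?_⟩
  filter_upwards [hw.1.1.ae_eq_mk, hw.2] with τ h1 h2
  rw [← h1, min_eq_right h2.2, max_eq_right h2.1]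

end Aux3
set_option maxHeartbeats 1000000 in
/-- First-order variational inequality at an optimal weight `w` of the bilevel problem. -/
theorem stmt19
    {d : ℕ} (hd : 1 ≤ d)
    (Ω : Set (Rd d)) (hΩm : MeasurableSet Ω) (hΩb : Bornology.IsBounded Ω)
    (ε : ℝ) (hε : 0 < ε)
    (ΩI : Set (Rd d)) (hΩI : ΩI = interDom Ω ε)
    (Ohat : Set (Rd d)) (hOhat : Ohat = Ω ∪ ΩI)
    (ρ : ℝ) (hρ : 0 < ρ) (Wb : ℝ) (hWb : 0 < Wb)
    (f : Rd d → ℝ) (hfL : MemLp f ⊤ (volume : Measure (Rd d)))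
    (hf0 : ∀ᵐ x : Rd d ∂volume, x ∉ Ohat → f x = 0)
    (c₀ C₀ : ℝ) (hc₀ : 0 < c₀) (hc₀C₀ : c₀ ≤ C₀)
    (hequiv : ∀ w ∈ Uad (d := d) ρ Wb, ∀ v ∈ Vc Ohat ΩI,
      c₀ * L2norm Ohat v ^ 2 ≤ innerV Ohat (kernelW ρ ε f w) v v ∧
        innerV Ohat (kernelW ρ ε f w) v v ≤ C₀ * L2norm Ohat v ^ 2)
    (μ : ℝ) (hμ : 0 < μ) (lam : ℝ) (hlam : 0 < lam)
    (uT : Rd d → ℝ) (huT : MemLp uT 2 (volume.restrict Ω))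
    (usol : (Rd d → ℝ) → Rd d → ℝ)
    (husol : ∀ w' ∈ Uad (d := d) ρ Wb, usol w' ∈ Vc Ohat ΩI ∧
      ∀ ψ ∈ Vc Ohat ΩI,
        μ * innerV Ohat (kernelW ρ ε f w') (usol w') ψ +
          lam * ∫ x in Ω, (usol w' x - f x) * ψ x = 0)
    (w : Rd d → ℝ) (hw : w ∈ Uad (d := d) ρ Wb)
    (hmin : ∀ w' ∈ Uad (d := d) ρ Wb,
      1 / 2 * L2norm Ω (fun x => usol w x - uT x) ^ 2 ≤
        1 / 2 * L2norm Ω (fun x => usol w' x - uT x) ^ 2)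
    (p : Rd d → ℝ) (hp : p ∈ Vc Ohat ΩI)
    (hadj : ∀ φ ∈ Vc Ohat ΩI,
      μ * innerV Ohat (kernelW ρ ε f w) p φ + lam * ∫ x in Ω, p x * φ x =
        -∫ x in Ω, (usol w x - uT x) * φ x) :
    ∀ hdir ∈ Uad (d := d) ρ Wb,
      0 ≤ μ * innerV Ohat (kernelLin ρ ε f w (fun τ => hdir τ - w τ)) (usol w) p := by
  intro hdir hh
  -- set inclusions and finiteness
  have hΩsub : Ω ⊆ Ohat := hOhat ▸ Set.subset_union_left
  have hΩIsub : ΩI ⊆ Ohat := hOhat ▸ Set.subset_union_right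
  have hΩIb : Bornology.IsBounded ΩI := by
    obtain ⟨R, hR⟩ := isBounded_iff_forall_norm_le.mp hΩb
    refine isBounded_iff_forall_norm_le.mpr ⟨R + ε, fun y hy => ?_⟩
    rw [hΩI] at hy
    obtain ⟨-, x, hx, hxy⟩ := hy
    calc ‖y‖ = ‖x + (y - x)‖ := by rw [add_sub_cancel]
      _ ≤ ‖x‖ + ‖y - x‖ := norm_add_le _ _
      _ ≤ R + ε := add_le_add (hR x hx) hxy
  have hAb : Bornology.IsBounded Ohat := hOhat ▸ hΩb.union hΩIb
  have hAfin : volume Ohat ≠ ⊤ := hAb.measure_lt_top.ne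
  haveI hFA : IsFiniteMeasure (volume.restrict Ohat) := finiteRestrict hAfin
  haveI hFΩ : IsFiniteMeasure (volume.restrict Ω) :=
    finiteRestrict (ne_top_of_le_ne_top hAfin (measure_mono hΩsub))
  have hBρfin : volume (Metric.closedBall (0 : Rd d) ρ) ≠ ⊤ :=
    Metric.isBounded_closedBall.measure_lt_top.ne
  -- almost-everywhere transfer from Ohat to Ω and ΩI
  have haeΩ : ∀ {g g' : Rd d → ℝ}, g =ᵐ[volume.restrict Ohat] g' →
      g =ᵐ[volume.restrict Ω] g' :=
    fun h => h.filter_mono (ae_mono (Measure.restrict_mono hΩsub le_rfl))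
  -- bounded measurable representative of f
  have hM0 : (0:ℝ) ≤ (eLpNorm f ⊤ volume).toReal := ENNReal.toReal_nonneg
  set M := (eLpNorm f ⊤ (volume : Measure (Rd d))).toReal with hMdef
  have hfM : ∀ᵐ z ∂(volume : Measure (Rd d)), ‖f z‖ ≤ M := by
    have h2 : eLpNorm f ⊤ (volume : Measure (Rd d)) ≠ ⊤ := hfL.2.ne
    rw [eLpNorm_exponent_top] at h2
    filter_upwards [ae_le_eLpNormEssSup (f := f) (μ := (volume : Measure (Rd d)))] with z hz
    calc ‖f z‖ = ((‖f z‖₊ : ℝ≥0∞)).toReal := by simp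
      _ ≤ (eLpNormEssSup f volume).toReal := ENNReal.toReal_mono h2 hz
      _ = M := by rw [hMdef, eLpNorm_exponent_top]
  set ftil : Rd d → ℝ := fun z => max (-M) (min M (hfL.1.mk f z)) with hftil
  have hfmeas : Measurable ftil :=
    measurable_const.max (measurable_const.min hfL.1.stronglyMeasurable_mk.measurable)
  have hffe : f =ᵐ[(volume : Measure (Rd d))] ftil := by
    filter_upwards [hfL.1.ae_eq_mk, hfM] with z h1 h2
    have habs : |f z| ≤ M := by rwa [Real.norm_eq_abs] at h2
    rw [hftil]
    simp only [← h1]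
    rw [min_eq_right (abs_le.mp habs).2, max_eq_right (abs_le.mp habs).1]
  have hfb : ∀ z, |ftil z| ≤ M := fun z => by
    rw [abs_le]
    refine ⟨le_max_left _ _, max_le (by linarith) (min_le_left _ _)⟩
  -- clamped representatives of the weights
  obtain ⟨wt, hwtm, hwtb, hwe⟩ := clamp_weight hWb.le hw
  obtain ⟨ht2, ht2m, ht2b, ht2e⟩ := clamp_weight hWb.le hh
  set qt : Rd d → ℝ := fun τ => ht2 τ - wt τ with hqt
  have hqm : Measurable qt := ht2m.sub hwtm
  have hqb : ∀ τ, |qt τ| ≤ Wb := fun τ => by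
    rw [hqt, abs_le]
    constructor <;> simp only <;> [linarith [(hwtb τ).2, (ht2b τ).1]; linarith [(hwtb τ).1, (ht2b τ).2]]
  -- the interaction strength and its bound
  set CB := (volume (Metric.closedBall (0:Rd d) ρ)).toReal with hCB
  set C := Wb * (2*M)^2 * CB with hCdef
  have hCB0 : 0 ≤ CB := ENNReal.toReal_nonneg
  have hC0 : 0 ≤ C := mul_nonneg (mul_nonneg hWb.le (by positivity)) hCB0
  set Iker : Rd d → Rd d → ℝ :=
    fun x y => ∫ τ in Metric.closedBall (0:Rd d) ρ, qt τ * (ftil (x + τ) - ftil (y + τ))^2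
    with hIker
  have hptwise : ∀ (g : Rd d → ℝ), (∀ τ, |g τ| ≤ Wb) → ∀ x y τ : Rd d,
      ‖g τ * (ftil (x + τ) - ftil (y + τ))^2‖ ≤ Wb * (2*M)^2 := by
    intro g hgb x y τ
    have hΔ : |ftil (x+τ) - ftil (y+τ)| ≤ 2*M := by
      have := norm_sub_le (ftil (x+τ)) (ftil (y+τ))
      rw [Real.norm_eq_abs, Real.norm_eq_abs, Real.norm_eq_abs] at this
      linarith [hfb (x+τ), hfb (y+τ)]
    have hΔ2 : (ftil (x+τ) - ftil (y+τ))^2 ≤ (2*M)^2 := by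
      rw [← sq_abs]
      exact pow_le_pow_left₀ (abs_nonneg _) hΔ 2
    rw [Real.norm_eq_abs, abs_mul, abs_of_nonneg (sq_nonneg (ftil (x+τ) - ftil (y+τ)))]
    exact mul_le_mul (hgb τ) hΔ2 (sq_nonneg _) hWb.le
  have hwtabs : ∀ τ, |wt τ| ≤ Wb := fun τ => by
    rw [abs_le]; exact ⟨by linarith [(hwtb τ).1, hWb.le], (hwtb τ).2⟩
  have hintg : ∀ (g : Rd d → ℝ), Measurable g → (∀ τ, |g τ| ≤ Wb) → ∀ x y : Rd d,
      Integrable (fun τ => g τ * (ftil (x+τ) - ftil (y+τ))^2)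
        (volume.restrict (Metric.closedBall (0:Rd d) ρ)) := by
    intro g hgm hgb x y
    haveI := finiteRestrict hBρfin
    refine (integrable_const (Wb * (2*M)^2)).mono'
      ((hgm.mul (((hfmeas.comp (measurable_id.const_add x)).sub
        (hfmeas.comp (measurable_id.const_add y))).pow_const 2)).aestronglyMeasurable)
      (ae_of_all _ fun τ => hptwise g hgb x y τ)
  have hIb : ∀ x y, |Iker x y| ≤ C := by
    intro x y
    rw [← Real.norm_eq_abs, hCdef]
    exact norm_setIntegral_le_of_norm_le_const_ae (lt_top_iff_ne_top.mpr hBρfin)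
      (ae_of_all _ fun τ => hptwise qt hqb x y τ)
  -- measurable representatives of u = usol w and p
  have hVu := (husol w hw).1
  have hSw := (husol w hw).2
  set ut := hVu.1.1.mk (usol w) with hut
  have hue : usol w =ᵐ[volume.restrict Ohat] ut := hVu.1.1.ae_eq_mk
  have hutm : Measurable ut := hVu.1.1.stronglyMeasurable_mk.measurable
  have hut2 : MemLp ut 2 (volume.restrict Ohat) := hVu.1.ae_eq hue
  set pt := hp.1.1.mk p with hpt
  have hpe : p =ᵐ[volume.restrict Ohat] pt := hp.1.1.ae_eq_mk
  have hptm : Measurable pt := hp.1.1.stronglyMeasurable_mk.measurable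
  have hpt2 : MemLp pt 2 (volume.restrict Ohat) := hp.1.ae_eq hpe
  -- kernels
  set κw := kernelW ρ ε ftil wt with hκw
  have hκwm : Measurable (fun q : Rd d × Rd d => κw q.1 q.2) := measurable_kernelW hfmeas hwtm
  have hκwptwise : ∀ x y, kernelW ρ ε f w x y = κw x y := kernelW_congr hffe hwe
  have hJnn : ∀ wz : Rd d → ℝ, (∀ τ, 0 ≤ wz τ) → ∀ x y : Rd d,
      0 ≤ ∫ τ in Metric.closedBall (0:Rd d) ρ, wz τ * (ftil (x + τ) - ftil (y + τ))^2 :=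
    fun wz hwz x y => integral_nonneg fun τ => mul_nonneg (hwz τ) (sq_nonneg _)
  have hkerWb : ∀ wz : Rd d → ℝ, (∀ τ, 0 ≤ wz τ) → ∀ x y : Rd d,
      |kernelW ρ ε ftil wz x y| ≤ 1 := by
    intro wz hwz x y
    unfold kernelW
    split_ifs with hxy
    · rw [abs_of_pos (Real.exp_pos _)]
      rw [Real.exp_le_one_iff]
      exact neg_nonpos.mpr (hJnn wz hwz x y)
    · simp
  have hκwb : ∀ x y, |κw x y| ≤ 1 := hkerWb wt fun τ => (hwtb τ).1
  set γlin := kernelLin ρ ε ftil wt qt with hγlin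
  have hγm : Measurable (fun q : Rd d × Rd d => γlin q.1 q.2) :=
    measurable_kernelLin hfmeas hwtm hqm
  have hγptwise : ∀ x y, kernelLin ρ ε f w (fun τ => hdir τ - w τ) x y = γlin x y := by
    intro x y
    refine kernelLin_congr hffe hwe ?_ x y
    filter_upwards [hwe, ht2e] with τ h1 h2
    rw [hqt]
    simp only
    rw [h1, h2]
  have hγb : ∀ x y, |γlin x y| ≤ C := by
    intro x y
    rw [hγlin]
    unfold kernelLin
    split_ifs with hxy
    · rw [neg_mul, abs_neg, abs_mul]
      calc |kernelW ρ ε ftil wt x y| * |∫ τ in Metric.closedBall (0:Rd d) ρ,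
            qt τ * (ftil (x + τ) - ftil (y + τ))^2| ≤ 1 * C :=
          mul_le_mul (hκwb x y) (hIb x y) (abs_nonneg _) zero_le_one
        _ = C := one_mul C
    · simpa using hC0
  -- reduce to the tilde-world goal
  have hgoal : μ * innerV Ohat (kernelLin ρ ε f w (fun τ => hdir τ - w τ)) (usol w) p =
      μ * innerV Ohat γlin ut pt := by
    rw [innerV_kernel_congr hγptwise, innerV_congr_ae (κ := γlin) hue hpe]
  rw [hgoal]
  -- constants for the final estimate
  set VA := (volume Ohat).toReal with hVA
  have hVA0 : 0 ≤ VA := ENNReal.toReal_nonneg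
  set qu := ∫ x in Ohat, ut x ^ 2 with hqu
  set qp := ∫ x in Ohat, pt x ^ 2 with hqp
  have hqu0 : 0 ≤ qu := integral_nonneg fun x => sq_nonneg _
  have hqp0 : 0 ≤ qp := integral_nonneg fun x => sq_nonneg _
  set X := μ * innerV Ohat γlin ut pt with hX
  set D := 8 * C * VA * Real.sqrt qu / c₀ with hD
  have hD0 : 0 ≤ D := div_nonneg (by positivity) hc₀.le
  set E := 2*μ*(8*C*VA*(D*Real.sqrt qp)) + (2*μ*(4*C^2*VA*(Real.sqrt qu*Real.sqrt qp)) + D^2)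
    with hE
  have hE0 : 0 ≤ E := by positivity
  -- the key inequality, valid for all small positive t
  have key : ∀ t : ℝ, 0 < t → t ≤ 1 → t * C ≤ 1 → 0 ≤ 2*t*X + t^2*E := by
    intro t ht0 ht1 htC
    -- the perturbed weight
    set w' : Rd d → ℝ := fun τ => w τ + t * (hdir τ - w τ) with hw'def
    have hw' : w' ∈ Uad (d := d) ρ Wb := by
      constructor
      · exact hw.1.add ((hh.1.sub hw.1).const_mul t)
      · filter_upwards [hw.2, hh.2] with τ h1 h2
        constructor
        · show 0 ≤ w τ + t * (hdir τ - w τ)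
          nlinarith only [h1.1, h1.2, h2.1, h2.2, ht0, ht1]
        · show w τ + t * (hdir τ - w τ) ≤ Wb
          nlinarith only [h1.1, h1.2, h2.1, h2.2, ht0, ht1]
    set wt' : Rd d → ℝ := fun τ => wt τ + t * qt τ with hwt'def
    have hwt'm : Measurable wt' := hwtm.add (hqm.const_mul t)
    have hwt'b : ∀ τ, 0 ≤ wt' τ ∧ wt' τ ≤ Wb := by
      intro τ
      have h1 := hwtb τ; have h2 := ht2b τ
      constructor
      · show 0 ≤ wt τ + t * (ht2 τ - wt τ)
        nlinarith only [h1.1, h1.2, h2.1, h2.2, ht0, ht1]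
      · show wt τ + t * (ht2 τ - wt τ) ≤ Wb
        nlinarith only [h1.1, h1.2, h2.1, h2.2, ht0, ht1]
    have hwe' : w' =ᵐ[volume.restrict (Metric.closedBall (0:Rd d) ρ)] wt' := by
      filter_upwards [hwe, ht2e] with τ e1 e2
      show w τ + t * (hdir τ - w τ) = wt τ + t * (ht2 τ - wt τ)
      rw [e1, e2]
    set κ' := kernelW ρ ε ftil wt' with hκ'
    have hκ'm : Measurable (fun q : Rd d × Rd d => κ' q.1 q.2) := measurable_kernelW hfmeas hwt'm
    have hκ'b : ∀ x y, |κ' x y| ≤ 1 := hkerWb wt' fun τ => (hwt'b τ).1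
    have hκ'ptwise : ∀ x y, kernelW ρ ε f w' x y = κ' x y := kernelW_congr hffe hwe'
    -- exponential splitting of κ'
    have hsplit : ∀ x y, κ' x y = κw x y * Real.exp (-(t * Iker x y)) := by
      intro x y
      show kernelW ρ ε ftil wt' x y = kernelW ρ ε ftil wt x y * Real.exp (-(t * Iker x y))
      unfold kernelW
      split_ifs with hxy
      · have heq : (∫ τ in Metric.closedBall (0:Rd d) ρ,
            wt' τ * (ftil (x + τ) - ftil (y + τ))^2)
            = (∫ τ in Metric.closedBall (0:Rd d) ρ, wt τ * (ftil (x + τ) - ftil (y + τ))^2)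
              + t * Iker x y := by
          rw [hIker]
          calc (∫ τ in Metric.closedBall (0:Rd d) ρ, wt' τ * (ftil (x+τ) - ftil (y+τ))^2)
              = ∫ τ in Metric.closedBall (0:Rd d) ρ,
                  (wt τ * (ftil (x+τ) - ftil (y+τ))^2
                    + t * (qt τ * (ftil (x+τ) - ftil (y+τ))^2)) :=
              integral_congr_ae (ae_of_all _ fun τ => by
                show wt' τ * _ = _
                rw [hwt'def]; ring)
            _ = (∫ τ in Metric.closedBall (0:Rd d) ρ, wt τ * (ftil (x+τ) - ftil (y+τ))^2)
                + ∫ τ in Metric.closedBall (0:Rd d) ρ,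
                    t * (qt τ * (ftil (x+τ) - ftil (y+τ))^2) :=
              integral_add (hintg wt hwtm hwtabs x y) ((hintg qt hqm hqb x y).const_mul t)
            _ = _ := by rw [integral_const_mul]
        rw [heq, neg_add, Real.exp_add]
      · exact (zero_mul _).symm
    -- bounds on small exponent
    have htI1 : ∀ x y, |(-(t * Iker x y))| ≤ t * C := by
      intro x y
      rw [abs_neg, abs_mul, abs_of_pos ht0]
      exact mul_le_mul_of_nonneg_left (hIb x y) ht0.le
    have htI2 : ∀ x y, |(-(t * Iker x y))| ≤ 1 := fun x y => (htI1 x y).trans htC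
    -- difference kernel and remainder kernel
    set Kt : Rd d → Rd d → ℝ := fun x y => κ' x y - κw x y with hKtdef
    have hKtm : Measurable (fun q : Rd d × Rd d => Kt q.1 q.2) := hκ'm.sub hκwm
    have hKtb : ∀ x y, |Kt x y| ≤ 2 * (t * C) := by
      intro x y
      have h1 : |Real.exp (-(t * Iker x y)) - 1| ≤ 2 * |(-(t * Iker x y))| :=
        Real.abs_exp_sub_one_le (htI2 x y)
      have hKteq : Kt x y = κw x y * (Real.exp (-(t * Iker x y)) - 1) := by
        show κ' x y - κw x y = _
        rw [hsplit x y]; ring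
      rw [hKteq, abs_mul]
      calc |κw x y| * |Real.exp (-(t * Iker x y)) - 1| ≤ 1 * (2 * (t*C)) := by
            refine mul_le_mul (hκwb x y) (h1.trans ?_) (abs_nonneg _) zero_le_one
            linarith only [htI1 x y]
        _ = 2 * (t * C) := one_mul _
    set Rt : Rd d → Rd d → ℝ := fun x y => Kt x y - t * γlin x y with hRtdef
    have hRtm : Measurable (fun q : Rd d × Rd d => Rt q.1 q.2) := hKtm.sub (hγm.const_mul t)
    have hRtb : ∀ x y, |Rt x y| ≤ t^2 * C^2 := by
      intro x y
      have ht2C : (0:ℝ) ≤ t^2*C^2 := by positivity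
      by_cases hxy : ‖x - y‖ ≤ ε
      · have hγeq : γlin x y = -(κw x y * Iker x y) := by
          rw [hγlin]
          unfold kernelLin
          rw [if_pos hxy]
          simp only [hκw, hIker]
          ring
        have hReq : Rt x y = κw x y *
            (Real.exp (-(t*Iker x y)) - 1 - (-(t*Iker x y))) := by
          show Kt x y - t * γlin x y = _
          rw [hγeq]
          show κ' x y - κw x y - t * -(κw x y * Iker x y) = _
          rw [hsplit x y]; ring
        rw [hReq, abs_mul]
        have h3 := Real.abs_exp_sub_one_sub_id_le (htI2 x y)
        calc |κw x y| * |Real.exp (-(t*Iker x y)) - 1 - -(t*Iker x y)|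
            ≤ 1 * (-(t*Iker x y))^2 :=
              mul_le_mul (hκwb x y) h3 (abs_nonneg _) zero_le_one
          _ = (t * Iker x y)^2 := by ring
          _ ≤ t^2 * C^2 := by
              rw [mul_pow]
              refine mul_le_mul_of_nonneg_left ?_ (sq_nonneg t)
              exact sq_le_sq' (by linarith only [abs_le.mp (hIb x y)]) (abs_le.mp (hIb x y)).2
      · have hK0 : Kt x y = 0 := by
          show kernelW ρ ε ftil wt' x y - kernelW ρ ε ftil wt x y = 0
          unfold kernelW
          rw [if_neg hxy, if_neg hxy, sub_self]
        have hγ0 : γlin x y = 0 := by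
          rw [hγlin]; unfold kernelLin; rw [if_neg hxy]
        show |Kt x y - t * γlin x y| ≤ _
        rw [hK0, hγ0]
        simpa using ht2C
    -- the perturbed state and the difference
    have hVut := (husol w' hw').1
    have hSt := (husol w' hw').2
    set ut' := hVut.1.1.mk (usol w') with hut'
    have hue' : usol w' =ᵐ[volume.restrict Ohat] ut' := hVut.1.1.ae_eq_mk
    have hut'm : Measurable ut' := hVut.1.1.stronglyMeasurable_mk.measurable
    have hut'2 : MemLp ut' 2 (volume.restrict Ohat) := hVut.1.ae_eq hue'
    set δf : Rd d → ℝ := fun x => ut' x - ut x with hδf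
    have hδm : Measurable δf := hut'm.sub hutm
    have hδ2 : MemLp δf 2 (volume.restrict Ohat) := hut'2.sub hut2
    have hδe : (fun x => usol w' x - usol w x) =ᵐ[volume.restrict Ohat] δf := by
      filter_upwards [hue, hue'] with x e1 e2
      show usol w' x - usol w x = ut' x - ut x
      rw [e1, e2]
    have hδVc : (fun x => usol w' x - usol w x) ∈ Vc Ohat ΩI := by
      constructor
      · exact hVut.1.sub hVu.1
      · filter_upwards [hVut.2, hVu.2] with x e1 e2
        show usol w' x - usol w x = 0
        rw [e1, e2, sub_zero]
    set qδ := ∫ x in Ohat, δf x ^ 2 with hqδ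
    have hqδ0 : 0 ≤ qδ := integral_nonneg fun x => sq_nonneg _
    -- L² membership on Ω
    have hmono : volume.restrict Ω ≤ volume.restrict Ohat := Measure.restrict_mono hΩsub le_rfl
    have hut2Ω : MemLp ut 2 (volume.restrict Ω) := hut2.mono_measure hmono
    have hut'2Ω : MemLp ut' 2 (volume.restrict Ω) := hut'2.mono_measure hmono
    have hpt2Ω : MemLp pt 2 (volume.restrict Ω) := hpt2.mono_measure hmono
    have hδ2Ω : MemLp δf 2 (volume.restrict Ω) := hδ2.mono_measure hmono
    have hft2Ω : MemLp ftil 2 (volume.restrict Ω) :=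
      MemLp.mono_exponent (memLp_top_of_bound hfmeas.aestronglyMeasurable M
        (ae_of_all _ fun z => by rw [Real.norm_eq_abs]; exact hfb z)) le_top
    have hfeΩ : f =ᵐ[volume.restrict Ω] ftil := ae_restrict_of_ae hffe
    -- tilde-ized equations
    have S0p : μ * innerV Ohat κw ut pt + lam * ∫ x in Ω, (ut x - ftil x) * pt x = 0 := by
      have h0 := hSw p hp
      rwa [innerV_kernel_congr hκwptwise, innerV_congr_ae (κ := κw) hue hpe,
        show (∫ x in Ω, (usol w x - f x) * p x) = ∫ x in Ω, (ut x - ftil x) * pt x from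
          integral_congr_ae (by
            filter_upwards [haeΩ hue, hfeΩ, haeΩ hpe] with x e1 e2 e3
            rw [e1, e2, e3])] at h0
    have Stp : μ * innerV Ohat κ' ut' pt + lam * ∫ x in Ω, (ut' x - ftil x) * pt x = 0 := by
      have h0 := hSt p hp
      rwa [innerV_kernel_congr hκ'ptwise, innerV_congr_ae (κ := κ') hue' hpe,
        show (∫ x in Ω, (usol w' x - f x) * p x) = ∫ x in Ω, (ut' x - ftil x) * pt x from
          integral_congr_ae (by
            filter_upwards [haeΩ hue', hfeΩ, haeΩ hpe] with x e1 e2 e3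
            rw [e1, e2, e3])] at h0
    have S0δ : μ * innerV Ohat κw ut δf + lam * ∫ x in Ω, (ut x - ftil x) * δf x = 0 := by
      have h0 := hSw _ hδVc
      rwa [innerV_kernel_congr hκwptwise, innerV_congr_ae (κ := κw) hue hδe,
        show (∫ x in Ω, (usol w x - f x) * (usol w' x - usol w x))
            = ∫ x in Ω, (ut x - ftil x) * δf x from
          integral_congr_ae (by
            filter_upwards [haeΩ hue, hfeΩ, haeΩ hδe] with x e1 e2 e3
            rw [e3, e1, e2])] at h0
    have Stδ : μ * innerV Ohat κ' ut' δf + lam * ∫ x in Ω, (ut' x - ftil x) * δf x = 0 := by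
      have h0 := hSt _ hδVc
      rwa [innerV_kernel_congr hκ'ptwise, innerV_congr_ae (κ := κ') hue' hδe,
        show (∫ x in Ω, (usol w' x - f x) * (usol w' x - usol w x))
            = ∫ x in Ω, (ut' x - ftil x) * δf x from
          integral_congr_ae (by
            filter_upwards [haeΩ hue', hfeΩ, haeΩ hδe] with x e1 e2 e3
            rw [e3, e1, e2])] at h0
    have Adjδ : μ * innerV Ohat κw pt δf + lam * ∫ x in Ω, pt x * δf x
        = -∫ x in Ω, (ut x - uT x) * δf x := by
      have h0 := hadj _ hδVc
      rwa [innerV_kernel_congr hκwptwise, innerV_congr_ae (κ := κw) hpe hδe,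
        show (∫ x in Ω, p x * (usol w' x - usol w x)) = ∫ x in Ω, pt x * δf x from
          integral_congr_ae (by
            filter_upwards [haeΩ hpe, haeΩ hδe] with x e1 e3
            rw [e3, e1]),
        show (∫ x in Ω, (usol w x - uT x) * (usol w' x - usol w x))
            = ∫ x in Ω, (ut x - uT x) * δf x from
          integral_congr_ae (by
            filter_upwards [haeΩ hue, haeΩ hδe] with x e1 e3
            rw [e3, e1])] at h0
    -- coercivity at w'
    have hcoerc : c₀ * qδ ≤ innerV Ohat κ' δf δf := by
      have h0 := (hequiv w' hw' _ hδVc).1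
      rwa [innerV_kernel_congr hκ'ptwise, innerV_congr_ae (κ := κ') hδe hδe,
        show L2norm Ohat (fun x => usol w' x - usol w x) ^ 2 = qδ from by
          rw [L2norm_sq_eq hδVc.1, hqδ]
          exact integral_congr_ae (by
            filter_upwards [hδe] with x e1
            rw [show usol w' x - usol w x = δf x from e1])] at h0
    -- expansion identities
    have esplitL : ∀ (v : Rd d → ℝ), Measurable v → MemLp v 2 (volume.restrict Ohat) →
        innerV Ohat κ' ut' v = innerV Ohat κ' δf v + innerV Ohat κ' ut v := by
      intro v hvm hv2
      rw [show innerV Ohat κ' ut' v = innerV Ohat κ' (fun x => δf x + ut x) v from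
        innerV_congr_ae (ae_of_all _ fun x => by
          show ut' x = (ut' x - ut x) + ut x; ring) EventuallyEq.rfl]
      exact innerV_add_left hAfin hδm hδ2 hutm hut2 hvm hv2 hκ'm hκ'b
    have esplitK : ∀ (u v : Rd d → ℝ), Measurable u → MemLp u 2 (volume.restrict Ohat) →
        Measurable v → MemLp v 2 (volume.restrict Ohat) →
        innerV Ohat κ' u v = innerV Ohat κw u v + innerV Ohat Kt u v := by
      intro u v hum hu2 hvm hv2
      rw [show innerV Ohat κ' u v = innerV Ohat (fun x y => κw x y + Kt x y) u v from
        innerV_kernel_congr fun x y => by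
          show κ' x y = κw x y + (κ' x y - κw x y); ring]
      exact innerV_add_kernel hAfin hum hu2 hvm hv2 hκwm hκwb hKtm hKtb
    have eKt : innerV Ohat Kt ut pt
        = t * innerV Ohat γlin ut pt + innerV Ohat Rt ut pt := by
      rw [show innerV Ohat Kt ut pt = innerV Ohat (fun x y => t * γlin x y + Rt x y) ut pt from
        innerV_kernel_congr fun x y => by
          show Kt x y = t * γlin x y + (Kt x y - t * γlin x y); ring]
      rw [innerV_add_kernel hAfin hutm hut2 hptm hpt2 (hγm.const_mul t)
        (fun x y => by
          rw [abs_mul, abs_of_pos ht0]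
          exact mul_le_mul_of_nonneg_left (hγb x y) ht0.le) hRtm hRtb]
      rw [innerV_smul_kernel]
    -- Ω-integral identities
    have hIδp : (∫ x in Ω, (ut' x - ftil x) * pt x) - ∫ x in Ω, (ut x - ftil x) * pt x
        = ∫ x in Ω, δf x * pt x := by
      have i1 : Integrable (fun x => (ut' x - ftil x) * pt x) (volume.restrict Ω) :=
        integrable_mul_L2 (hut'2Ω.sub hft2Ω) hpt2Ω
      have i2 : Integrable (fun x => (ut x - ftil x) * pt x) (volume.restrict Ω) :=
        integrable_mul_L2 (hut2Ω.sub hft2Ω) hpt2Ω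
      rw [← integral_sub i1 i2]
      exact integral_congr_ae (ae_of_all _ fun x => by
        show (ut' x - ftil x) * pt x - (ut x - ftil x) * pt x = (ut' x - ut x) * pt x
        ring)
    have hIδδ : (∫ x in Ω, (ut' x - ftil x) * δf x) - ∫ x in Ω, (ut x - ftil x) * δf x
        = ∫ x in Ω, δf x * δf x := by
      have i1 : Integrable (fun x => (ut' x - ftil x) * δf x) (volume.restrict Ω) :=
        integrable_mul_L2 (hut'2Ω.sub hft2Ω) hδ2Ω
      have i2 : Integrable (fun x => (ut x - ftil x) * δf x) (volume.restrict Ω) :=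
        integrable_mul_L2 (hut2Ω.sub hft2Ω) hδ2Ω
      rw [← integral_sub i1 i2]
      exact integral_congr_ae (ae_of_all _ fun x => by
        show (ut' x - ftil x) * (ut' x - ut x) - (ut x - ftil x) * (ut' x - ut x)
          = (ut' x - ut x) * (ut' x - ut x)
        ring)
    have hptδ : ∫ x in Ω, pt x * δf x = ∫ x in Ω, δf x * pt x :=
      integral_congr_ae (ae_of_all _ fun x => mul_comm _ _)
    -- coercivity chain: bound on qδ
    have eqA : μ * innerV Ohat κ' δf δf + μ * innerV Ohat Kt ut δf
        + lam * ∫ x in Ω, δf x * δf x = 0 := by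
      have h1 := Stδ
      have h3 : (∫ x in Ω, (ut' x - ftil x) * δf x)
          = (∫ x in Ω, (ut x - ftil x) * δf x) + ∫ x in Ω, δf x * δf x := by
        linear_combination hIδδ
      rw [esplitL δf hδm hδ2, esplitK ut δf hutm hut2 hδm hδ2, h3] at h1
      have h2 := S0δ
      linear_combination h1 - h2
    have hdd0 : 0 ≤ ∫ x in Ω, δf x * δf x := integral_nonneg fun x => mul_self_nonneg _
    have habsKtδ : |innerV Ohat Kt ut δf|
        ≤ 4 * (2*(t*C)) * VA * (Real.sqrt qu * Real.sqrt qδ) := by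
      have h0 := innerV_abs_le hAfin hutm hut2 hδm hδ2 hKtm hKtb
      rwa [← hqu, ← hqδ, ← hVA] at h0
    have hqδle : Real.sqrt qδ ≤ t * D := by
      have h4 : μ * (c₀ * qδ) ≤ μ * innerV Ohat κ' δf δf := mul_le_mul_of_nonneg_left hcoerc hμ.le
      have habsneg : μ * -|innerV Ohat Kt ut δf| ≤ μ * innerV Ohat Kt ut δf :=
        mul_le_mul_of_nonneg_left (neg_abs_le _) hμ.le
      have h5 : μ * innerV Ohat κ' δf δf ≤ μ * |innerV Ohat Kt ut δf| := by
        have hlI : 0 ≤ lam * ∫ x in Ω, δf x * δf x := mul_nonneg hlam.le hdd0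
        linarith only [eqA, habsneg, hlI]
      have h6 : c₀ * qδ ≤ |innerV Ohat Kt ut δf| := le_of_mul_le_mul_left (h4.trans h5) hμ
      have h7 : c₀ * qδ ≤ 8*(t*C) * VA * (Real.sqrt qu * Real.sqrt qδ) := by
        refine h6.trans (habsKtδ.trans (le_of_eq ?_)); ring
      have hsq : Real.sqrt qδ * Real.sqrt qδ = qδ := Real.mul_self_sqrt hqδ0
      by_cases hz : Real.sqrt qδ = 0
      · rw [hz]; exact mul_nonneg ht0.le hD0
      · have hzpos : 0 < Real.sqrt qδ := (Real.sqrt_nonneg _).lt_of_ne (Ne.symm hz)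
        have h8 : c₀ * Real.sqrt qδ ≤ 8*(t*C)*VA*Real.sqrt qu := by
          have h9 : (c₀ * Real.sqrt qδ) * Real.sqrt qδ
              ≤ (8*(t*C)*VA*Real.sqrt qu) * Real.sqrt qδ := by
            calc (c₀ * Real.sqrt qδ) * Real.sqrt qδ = c₀ * qδ := by rw [mul_assoc, hsq]
              _ ≤ 8*(t*C) * VA * (Real.sqrt qu * Real.sqrt qδ) := h7
              _ = (8*(t*C)*VA*Real.sqrt qu) * Real.sqrt qδ := by ring
          exact le_of_mul_le_mul_right h9 hzpos
        have h11 : c₀ * Real.sqrt qδ ≤ c₀ * (t * D) := by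
          have h12 : c₀ * (t * D) = t * (8*C*VA*Real.sqrt qu) := by
            rw [hD]; field_simp
          rw [h12]
          calc c₀ * Real.sqrt qδ ≤ 8*(t*C)*VA*Real.sqrt qu := h8
            _ = t * (8*C*VA*Real.sqrt qu) := by ring
        exact le_of_mul_le_mul_left h11 hc₀
    have hqδle2 : qδ ≤ t^2 * D^2 := by
      have h1 : Real.sqrt qδ * Real.sqrt qδ ≤ (t*D) * (t*D) :=
        mul_le_mul hqδle hqδle (Real.sqrt_nonneg _) (mul_nonneg ht0.le hD0)
      have h2 := Real.mul_self_sqrt hqδ0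
      linarith only [h1, h2]
    -- main chain
    have eqB : μ * (innerV Ohat κw δf pt + innerV Ohat Kt δf pt
        + innerV Ohat κw ut pt + innerV Ohat Kt ut pt)
        + lam * ((∫ x in Ω, (ut x - ftil x) * pt x) + ∫ x in Ω, δf x * pt x) = 0 := by
      have h1 := Stp
      have h3 : (∫ x in Ω, (ut' x - ftil x) * pt x)
          = (∫ x in Ω, (ut x - ftil x) * pt x) + ∫ x in Ω, δf x * pt x := by
        linear_combination hIδp
      rw [esplitL pt hptm hpt2, esplitK δf pt hδm hδ2 hptm hpt2,
        esplitK ut pt hutm hut2 hptm hpt2, h3] at h1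
      linear_combination h1
    have Adj2 : μ * innerV Ohat κw δf pt + lam * ∫ x in Ω, δf x * pt x
        = -∫ x in Ω, (ut x - uT x) * δf x := by
      have h0 := Adjδ
      rwa [show innerV Ohat κw pt δf = innerV Ohat κw δf pt from innerV_symm, hptδ] at h0
    have eqC : μ * (innerV Ohat Kt δf pt + innerV Ohat Kt ut pt)
        = ∫ x in Ω, (ut x - uT x) * δf x := by
      linear_combination eqB - Adj2 - S0p
    -- optimality of w
    have hm0 := hmin w' hw'
    have hbr1 : L2norm Ω (fun x => usol w x - uT x) ^ 2 = ∫ x in Ω, (ut x - uT x)^2 := by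
      have hv1 : MemLp (fun x => usol w x - uT x) 2 (volume.restrict Ω) :=
        (hVu.1.mono_measure hmono).sub huT
      rw [L2norm_sq_eq hv1]
      exact integral_congr_ae (by
        filter_upwards [haeΩ hue] with x e1
        rw [show usol w x = ut x from e1])
    have hbr2 : L2norm Ω (fun x => usol w' x - uT x) ^ 2 = ∫ x in Ω, (ut' x - uT x)^2 := by
      have hv1 : MemLp (fun x => usol w' x - uT x) 2 (volume.restrict Ω) :=
        (hVut.1.mono_measure hmono).sub huT
      rw [L2norm_sq_eq hv1]
      exact integral_congr_ae (by
        filter_upwards [haeΩ hue'] with x e1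
        rw [show usol w' x = ut' x from e1])
    have hm2 : ∫ x in Ω, (ut x - uT x)^2 ≤ ∫ x in Ω, (ut' x - uT x)^2 := by
      rw [hbr1, hbr2] at hm0; linarith only [hm0]
    have hdiffint : (∫ x in Ω, (ut' x - uT x)^2) - ∫ x in Ω, (ut x - uT x)^2
        = (∫ x in Ω, δf x * δf x) + 2 * ∫ x in Ω, (ut x - uT x) * δf x := by
      have i1 : Integrable (fun x => (ut' x - uT x)^2) (volume.restrict Ω) :=
        (hut'2Ω.sub huT).integrable_sq
      have i2 : Integrable (fun x => (ut x - uT x)^2) (volume.restrict Ω) :=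
        (hut2Ω.sub huT).integrable_sq
      have i3 : Integrable (fun x => δf x * δf x) (volume.restrict Ω) :=
        integrable_mul_L2 hδ2Ω hδ2Ω
      have i4 : Integrable (fun x => 2 * ((ut x - uT x) * δf x)) (volume.restrict Ω) :=
        (integrable_mul_L2 (hut2Ω.sub huT) hδ2Ω).const_mul 2
      rw [← integral_sub i1 i2, ← integral_const_mul, ← integral_add i3 i4]
      exact integral_congr_ae (ae_of_all _ fun x => by
        show (ut' x - uT x)^2 - (ut x - uT x)^2
          = (ut' x - ut x) * (ut' x - ut x) + 2 * ((ut x - uT x) * (ut' x - ut x))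
        ring)
    have hmain : 0 ≤ (∫ x in Ω, δf x * δf x) + 2 * ∫ x in Ω, (ut x - uT x) * δf x := by
      linarith only [hm2, hdiffint]
    have hXeq : μ * innerV Ohat Kt ut pt = t * X + μ * innerV Ohat Rt ut pt := by
      rw [eKt, hX]; ring
    have hmain3 : 0 ≤ (∫ x in Ω, δf x * δf x) + 2*(μ * innerV Ohat Kt δf pt)
        + 2*(t*X) + 2*(μ * innerV Ohat Rt ut pt) := by
      linarith only [hmain, eqC, hXeq]
    -- numeric bounds
    have habsKtδp : |innerV Ohat Kt δf pt|
        ≤ 4*(2*(t*C))*VA*(Real.sqrt qδ * Real.sqrt qp) := by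
      have h0 := innerV_abs_le hAfin hδm hδ2 hptm hpt2 hKtm hKtb
      rwa [← hqδ, ← hqp, ← hVA] at h0
    have habsRt : |innerV Ohat Rt ut pt|
        ≤ 4*(t^2*C^2)*VA*(Real.sqrt qu * Real.sqrt qp) := by
      have h0 := innerV_abs_le hAfin hutm hut2 hptm hpt2 hRtm hRtb
      rwa [← hqu, ← hqp, ← hVA] at h0
    have hb1 : innerV Ohat Kt δf pt ≤ t^2 * (8*C*VA*(D*Real.sqrt qp)) := by
      have h1 := (abs_le.mp habsKtδp).2
      have h3 : Real.sqrt qδ * Real.sqrt qp ≤ (t*D) * Real.sqrt qp :=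
        mul_le_mul_of_nonneg_right hqδle (Real.sqrt_nonneg _)
      have h4 : (0:ℝ) ≤ 8*(t*C)*VA :=
        mul_nonneg (mul_nonneg (by norm_num) (mul_nonneg ht0.le hC0)) hVA0
      calc innerV Ohat Kt δf pt ≤ 4*(2*(t*C))*VA*(Real.sqrt qδ * Real.sqrt qp) := h1
        _ = (8*(t*C)*VA) * (Real.sqrt qδ * Real.sqrt qp) := by ring
        _ ≤ (8*(t*C)*VA) * ((t*D) * Real.sqrt qp) := mul_le_mul_of_nonneg_left h3 h4
        _ = t^2 * (8*C*VA*(D*Real.sqrt qp)) := by ring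
    have hb2 : innerV Ohat Rt ut pt ≤ t^2*(4*C^2*VA*(Real.sqrt qu*Real.sqrt qp)) := by
      have h1 := (abs_le.mp habsRt).2
      calc innerV Ohat Rt ut pt ≤ 4*(t^2*C^2)*VA*(Real.sqrt qu * Real.sqrt qp) := h1
        _ = t^2*(4*C^2*VA*(Real.sqrt qu*Real.sqrt qp)) := by ring
    have hc1 : μ * innerV Ohat Kt δf pt ≤ μ * (t^2 * (8*C*VA*(D*Real.sqrt qp))) :=
      mul_le_mul_of_nonneg_left hb1 hμ.le
    have hc2 : μ * innerV Ohat Rt ut pt ≤ μ * (t^2*(4*C^2*VA*(Real.sqrt qu*Real.sqrt qp))) :=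
      mul_le_mul_of_nonneg_left hb2 hμ.le
    have hdd2 : (∫ x in Ω, δf x * δf x) ≤ t^2 * D^2 := by
      have h1 : (∫ x in Ω, δf x * δf x) = ∫ x in Ω, δf x ^ 2 :=
        integral_congr_ae (ae_of_all _ fun x => (sq (δf x)).symm)
      have h2 : (∫ x in Ω, δf x ^ 2) ≤ qδ := by
        rw [hqδ]
        exact setIntegral_mono_set hδ2.integrable_sq (ae_of_all _ fun x => sq_nonneg _)
          hΩsub.eventuallyLE
      linarith only [h1, h2, hqδle2]
    rw [hE]
    linarith only [hmain3, hc1, hc2, hdd2]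
  -- conclude
  by_contra hneg
  push_neg at hneg
  have hXneg : X < 0 := hneg
  have hC1 : (0:ℝ) < C + 1 := by linarith
  have hE1 : (0:ℝ) < E + 1 := by linarith
  set t := min (min 1 (1/(C+1))) (-X/(E+1)) with htdef
  have ht0 : 0 < t :=
    lt_min (lt_min one_pos (by positivity)) (div_pos (by linarith) hE1)
  have ht1 : t ≤ 1 := le_trans (min_le_left _ _) (min_le_left _ _)
  have htC : t * C ≤ 1 := by
    have h1 : t ≤ 1/(C+1) := le_trans (min_le_left _ _) (min_le_right _ _)
    have h2 : t * C ≤ (1/(C+1)) * C := mul_le_mul_of_nonneg_right h1 hC0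
    have h3 : (1/(C+1)) * C ≤ 1 := by
      rw [div_mul_eq_mul_div, one_mul, div_le_one hC1]
      linarith only []
    linarith only [h2, h3]
  have htE : t * (E+1) ≤ -X := by
    have h1 : t ≤ -X/(E+1) := min_le_right _ _
    exact (le_div_iff₀ hE1).mp h1
  have hk := key t ht0 ht1 htC
  nlinarith only [hk, htE, ht0, hE0, hXneg, mul_pos ht0 ht0,
    mul_le_mul_of_nonneg_left htE ht0.le, mul_neg_of_pos_of_neg ht0 hXneg]
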